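/- Let f(X) ∈ ℤ[X], λ a nonzero integer, and let ℓ, p be distinct primes with gcd(ℓp, λ) = 1 and coprime multiplicative orders τ_ℓ, τ_p of λ. For an integer a define integers a_ℓ, a_p by a_ℓ·τ_p + a_p·τ_ℓ ≡ a (mod τ_ℓ·τ_p), 0 ≤ a_ℓ < τ_ℓ, 0 ≤ a_p < τ_p. Then ∑_{n=1}^{τ_ℓ τ_p} (f(λⁿ) | ℓp) e(an/(τ_ℓ τ_p)) = [∑_{x=1}^{τ_ℓ} (f(λˣ) | ℓ) e(a_ℓ x/τ_ℓ)] · [∑_{y=1}^{τ_p} (f(λʸ) | p) e(a_p y/τ_p)], where (· | m) is the Jacobi symbol and e(t) = exp(2πit). -/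

import Mathlib

open Complex Polynomial

private noncomputable def jsfAux (f : Polynomial ℤ) (l : ℤ) (q b τ : ℕ) : ℕ → ℂ :=
  fun n => (jacobiSym (f.eval (l ^ n)) q : ℂ) *
    Complex.exp (2 * Real.pi * Complex.I * ((b : ℂ) * n / (τ : ℂ)))

private lemma jsfAux_periodic (f : Polynomial ℤ) (l : ℤ) (q b τ : ℕ) (hτ : 0 < τ)
    (hq : (q : ℤ) ∣ l ^ τ - 1) : Function.Periodic (jsfAux f l q b τ) τ := by
  intro n
  unfold jsfAux
  congr 1
  · norm_cast
    apply jacobiSym.mod_left'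
    have hdvd : (q : ℤ) ∣ f.eval (l ^ (n + τ)) - f.eval (l ^ n) := by
      refine dvd_trans ?_ (Polynomial.sub_dvd_eval_sub _ _ f)
      have h : l ^ (n + τ) - l ^ n = l ^ n * (l ^ τ - 1) := by rw [pow_add]; ring
      rw [h]
      exact hq.mul_left _
    have hme : f.eval (l ^ (n + τ)) ≡ f.eval (l ^ n) [ZMOD (q : ℤ)] :=
      (Int.modEq_iff_dvd.mpr hdvd).symm
    exact hme
  · have hτ0 : (τ : ℂ) ≠ 0 := Nat.cast_ne_zero.mpr hτ.ne'
    have hb : (b : ℂ) * ((n + τ : ℕ) : ℂ) / τ = (b : ℂ) * n / τ + ((b : ℤ) : ℂ) := by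
      push_cast
      field_simp
    rw [hb, mul_add, Complex.exp_add,
      show 2 * (Real.pi : ℂ) * Complex.I * ((b : ℤ) : ℂ)
        = ((b : ℤ) : ℂ) * (2 * Real.pi * Complex.I) by ring,
      Complex.exp_int_mul_two_pi_mul_I, mul_one]

private lemma crt_sum (s t : ℕ) (hs : 0 < s) (ht : 0 < t) (h : Nat.Coprime s t)
    (F G : ℕ → ℂ) (hF : Function.Periodic F s) (hG : Function.Periodic G t) :
    ∑ n ∈ Finset.range (s * t), F n * G n
      = (∑ x ∈ Finset.range s, F x) * (∑ y ∈ Finset.range t, G y) := by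
  rw [Finset.sum_mul_sum, ← Finset.sum_product']
  refine Finset.sum_nbij' (fun n => (n % s, n % t))
    (fun q => (Nat.chineseRemainder h q.1 q.2 : ℕ) % (s * t)) ?_ ?_ ?_ ?_ ?_
  · intro n _
    simp [Finset.mem_product, Nat.mod_lt _ hs, Nat.mod_lt _ ht]
  · intro q _
    simp [Nat.mod_lt _ (Nat.mul_pos hs ht)]
  · intro n hn
    have hcr := (Nat.chineseRemainder h (n % s) (n % t)).2
    have h1 : ((Nat.chineseRemainder h (n % s) (n % t) : ℕ)) ≡ n [MOD s] :=
      hcr.1.trans (Nat.mod_modEq n s)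
    have h2 : ((Nat.chineseRemainder h (n % s) (n % t) : ℕ)) ≡ n [MOD t] :=
      hcr.2.trans (Nat.mod_modEq n t)
    have h3 : ((Nat.chineseRemainder h (n % s) (n % t) : ℕ)) ≡ n [MOD s * t] :=
      (Nat.modEq_and_modEq_iff_modEq_mul h).mp ⟨h1, h2⟩
    have hn' : n < s * t := Finset.mem_range.mp hn
    show _ % (s * t) = n
    calc ((Nat.chineseRemainder h (n % s) (n % t) : ℕ)) % (s * t)
        = n % (s * t) := h3
      _ = n := Nat.mod_eq_of_lt hn'
  · intro q hq
    rw [Finset.mem_product] at hq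
    obtain ⟨hq1, hq2⟩ := hq
    have hcr := (Nat.chineseRemainder h q.1 q.2).2
    have e1 : ((Nat.chineseRemainder h q.1 q.2 : ℕ) % (s * t)) % s
        = (Nat.chineseRemainder h q.1 q.2 : ℕ) % s :=
      Nat.mod_mod_of_dvd _ (dvd_mul_right s t)
    have e2 : ((Nat.chineseRemainder h q.1 q.2 : ℕ) % (s * t)) % t
        = (Nat.chineseRemainder h q.1 q.2 : ℕ) % t :=
      Nat.mod_mod_of_dvd _ (dvd_mul_left t s)
    have f1 : (Nat.chineseRemainder h q.1 q.2 : ℕ) % s = q.1 := by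
      have hx := hcr.1
      rwa [Nat.ModEq, Nat.mod_eq_of_lt (Finset.mem_range.mp hq1)] at hx
    have f2 : (Nat.chineseRemainder h q.1 q.2 : ℕ) % t = q.2 := by
      have hx := hcr.2
      rwa [Nat.ModEq, Nat.mod_eq_of_lt (Finset.mem_range.mp hq2)] at hx
    ext
    · simp [e1, f1]
    · simp [e2, f2]
  · intro n _
    dsimp only
    rw [hF.map_mod_nat, hG.map_mod_nat]

private lemma icc_sum_eq (F : ℕ → ℂ) (c N : ℕ) (hF : Function.Periodic F c)
    (hc : c ∣ N) (hcpos : 0 < c) :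
    ∑ n ∈ Finset.Icc 1 N, F n = ∑ n ∈ Finset.range N, F n := by
  have hN0 : N % c = 0 := by
    obtain ⟨m, rfl⟩ := hc
    exact Nat.mul_mod_right c m
  have hFN : F N = F 0 := by
    have h1 := hF.map_mod_nat N
    rw [hN0] at h1
    exact h1.symm
  rw [← Finset.Ico_add_one_right_eq_Icc, Finset.sum_Ico_eq_sum_range]
  have hred : N + 1 - 1 = N := by omega
  rw [hred]
  have h2 := Finset.sum_range_succ' F N
  have h3 := Finset.sum_range_succ F N
  have h4 : ∀ i, F (1 + i) = F (i + 1) := fun i => by rw [add_comm]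
  simp only [h4]
  linear_combination h3 - h2 + hFN

/-- Korobov-type factorization of a complete Jacobi-symbol sum with an exponential
function to coprime prime moduli. -/
theorem jacobi_sum_factorization (f : Polynomial ℤ) (l : ℤ) (hl0 : l ≠ 0)
    (ℓ p : ℕ) (hℓ : ℓ.Prime) (hp : p.Prime) (hne : ℓ ≠ p)
    (hcop : IsCoprime ((ℓ : ℤ) * p) l)
    (τℓ τp : ℕ) (hτℓ : τℓ = orderOf (l : ZMod ℓ)) (hτp : τp = orderOf (l : ZMod p))
    (hτcop : Nat.Coprime τℓ τp)
    (a : ℤ) (aℓ ap : ℕ) (haℓ : aℓ < τℓ) (hap : ap < τp)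
    (hcong : ((aℓ * τp + ap * τℓ : ℕ) : ZMod (τℓ * τp)) = (a : ZMod (τℓ * τp))) :
    ∑ n ∈ Finset.Icc 1 (τℓ * τp),
        (jacobiSym (f.eval (l ^ n)) (ℓ * p) : ℂ) *
          Complex.exp (2 * Real.pi * Complex.I * ((a : ℂ) * n / ((τℓ : ℂ) * τp)))
      = (∑ x ∈ Finset.Icc 1 τℓ,
          (jacobiSym (f.eval (l ^ x)) ℓ : ℂ) *
            Complex.exp (2 * Real.pi * Complex.I * ((aℓ : ℂ) * x / (τℓ : ℂ)))) *
        (∑ y ∈ Finset.Icc 1 τp,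
          (jacobiSym (f.eval (l ^ y)) p : ℂ) *
            Complex.exp (2 * Real.pi * Complex.I * ((ap : ℂ) * y / (τp : ℂ)))) := by
  haveI : NeZero ℓ := ⟨hℓ.pos.ne'⟩
  haveI : NeZero p := ⟨hp.pos.ne'⟩
  have hunit : ∀ q : ℕ, IsCoprime (q : ℤ) l → IsUnit (l : ZMod q) := by
    intro q hq
    obtain ⟨u, v, huv⟩ := hq.symm
    have hc : ((u * l + v * (q : ℤ) : ℤ) : ZMod q) = ((1 : ℤ) : ZMod q) := by rw [huv]
    push_cast at hc
    rw [ZMod.natCast_self, mul_zero, add_zero] at hc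
    exact IsUnit.of_mul_eq_one _ (by rw [mul_comm]; exact hc)
  have hcℓ : IsCoprime ((ℓ : ℤ)) l := hcop.of_mul_left_left
  have hcp : IsCoprime ((p : ℤ)) l := hcop.of_mul_left_right
  have huℓ : IsUnit (l : ZMod ℓ) := hunit ℓ hcℓ
  have hup : IsUnit (l : ZMod p) := hunit p hcp
  have hτℓpos : 0 < τℓ := by
    rw [hτℓ, ← huℓ.unit_spec, orderOf_units]
    exact orderOf_pos _
  have hτppos : 0 < τp := by
    rw [hτp, ← hup.unit_spec, orderOf_units]
    exact orderOf_pos _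
  have hdℓ : (ℓ : ℤ) ∣ l ^ τℓ - 1 := by
    have h1 : ((l ^ τℓ - 1 : ℤ) : ZMod ℓ) = 0 := by
      push_cast
      rw [hτℓ, pow_orderOf_eq_one, sub_self]
    exact (ZMod.intCast_zmod_eq_zero_iff_dvd _ _).mp h1
  have hdp : (p : ℤ) ∣ l ^ τp - 1 := by
    have h1 : ((l ^ τp - 1 : ℤ) : ZMod p) = 0 := by
      push_cast
      rw [hτp, pow_orderOf_eq_one, sub_self]
    exact (ZMod.intCast_zmod_eq_zero_iff_dvd _ _).mp h1
  have hFℓ := jsfAux_periodic f l ℓ aℓ τℓ hτℓpos hdℓ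
  have hFp := jsfAux_periodic f l p ap τp hτppos hdp
  have h1 : (((aℓ * τp + ap * τℓ : ℕ) : ℤ) : ZMod (τℓ * τp)) = ((a : ℤ) : ZMod (τℓ * τp)) := by
    push_cast at hcong ⊢
    exact_mod_cast hcong
  obtain ⟨k, hk⟩ := ((ZMod.intCast_eq_intCast_iff _ _ _).mp h1).dvd
  have haC : (a : ℂ) = (aℓ : ℂ) * τp + (ap : ℂ) * τℓ + (τℓ : ℂ) * τp * (k : ℂ) := by
    have hkc := congrArg (fun z : ℤ => (z : ℂ)) hk
    push_cast at hkc
    linear_combination hkc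
  have hτℓ0 : (τℓ : ℂ) ≠ 0 := Nat.cast_ne_zero.mpr hτℓpos.ne'
  have hτp0 : (τp : ℂ) ≠ 0 := Nat.cast_ne_zero.mpr hτppos.ne'
  have hsummand : ∀ n : ℕ,
      (jacobiSym (f.eval (l ^ n)) (ℓ * p) : ℂ) *
        Complex.exp (2 * Real.pi * Complex.I * ((a : ℂ) * n / ((τℓ : ℂ) * τp)))
      = jsfAux f l ℓ aℓ τℓ n * jsfAux f l p ap τp n := by
    intro n
    unfold jsfAux
    rw [jacobiSym.mul_right, Int.cast_mul]
    have hexp : Complex.exp (2 * Real.pi * Complex.I * ((a : ℂ) * n / ((τℓ : ℂ) * τp)))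
        = Complex.exp (2 * Real.pi * Complex.I * ((aℓ : ℂ) * n / τℓ))
          * Complex.exp (2 * Real.pi * Complex.I * ((ap : ℂ) * n / τp)) := by
      rw [← Complex.exp_add, ← mul_add]
      have hXY : (a : ℂ) * n / ((τℓ : ℂ) * τp)
          = ((aℓ : ℂ) * n / τℓ + (ap : ℂ) * n / τp) + ((k * n : ℤ) : ℂ) := by
        rw [haC]
        push_cast
        field_simp
      rw [hXY, mul_add, Complex.exp_add,
        show 2 * (Real.pi : ℂ) * Complex.I * ((k * n : ℤ) : ℂ)
          = ((k * n : ℤ) : ℂ) * (2 * Real.pi * Complex.I) by ring,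
        Complex.exp_int_mul_two_pi_mul_I, mul_one]
    rw [hexp]
    ring
  have hprodper : Function.Periodic
      (fun n => jsfAux f l ℓ aℓ τℓ n * jsfAux f l p ap τp n) (τℓ * τp) := by
    intro n
    dsimp only
    have e1 : jsfAux f l ℓ aℓ τℓ (n + τℓ * τp) = jsfAux f l ℓ aℓ τℓ n := by
      rw [← hFℓ.map_mod_nat (n + τℓ * τp), Nat.add_mul_mod_self_left, hFℓ.map_mod_nat]
    have e2 : jsfAux f l p ap τp (n + τℓ * τp) = jsfAux f l p ap τp n := by
      rw [mul_comm τℓ τp, ← hFp.map_mod_nat (n + τp * τℓ), Nat.add_mul_mod_self_left,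
        hFp.map_mod_nat]
    rw [e1, e2]
  calc ∑ n ∈ Finset.Icc 1 (τℓ * τp),
        (jacobiSym (f.eval (l ^ n)) (ℓ * p) : ℂ) *
          Complex.exp (2 * Real.pi * Complex.I * ((a : ℂ) * n / ((τℓ : ℂ) * τp)))
      = ∑ n ∈ Finset.Icc 1 (τℓ * τp), jsfAux f l ℓ aℓ τℓ n * jsfAux f l p ap τp n :=
        Finset.sum_congr rfl fun n _ => hsummand n
    _ = ∑ n ∈ Finset.range (τℓ * τp), jsfAux f l ℓ aℓ τℓ n * jsfAux f l p ap τp n :=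
        icc_sum_eq _ (τℓ * τp) (τℓ * τp) hprodper dvd_rfl (Nat.mul_pos hτℓpos hτppos)
    _ = (∑ x ∈ Finset.range τℓ, jsfAux f l ℓ aℓ τℓ x)
          * (∑ y ∈ Finset.range τp, jsfAux f l p ap τp y) :=
        crt_sum τℓ τp hτℓpos hτppos hτcop _ _ hFℓ hFp
    _ = (∑ x ∈ Finset.Icc 1 τℓ, jsfAux f l ℓ aℓ τℓ x)
          * (∑ y ∈ Finset.Icc 1 τp, jsfAux f l p ap τp y) := by
        rw [icc_sum_eq _ τℓ τℓ hFℓ dvd_rfl hτℓpos, icc_sum_eq _ τp τp hFp dvd_rfl hτppos]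
    _ = _ := by
        unfold jsfAux
        rfl
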